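/- Under a uniform lower bound w_j^n ≥ C^{−(2−τ)/τ} on the weights, the exact IRLS iterates satisfy Σ_{n=1}^∞ ‖x̂^{n+1} − x̂^n‖_{ℓ2}^2 ≤ (2/τ)·C^{2/τ}; in particular ‖x̂^{n+1} − x̂^n‖_{ℓ2} → 0. -/

import Mathlib

/-- The IRLS functional `J_τ(x, w, ε)`. -/
noncomputable def Jfun {N : ℕ} (τ : ℝ) (x : Fin N → ℂ) (w : Fin N → ℝ) (ε : ℝ) : ℝ :=
  (τ / 2) * ((∑ j, ‖x j‖ ^ 2 * w j) +
    ∑ j, (ε ^ 2 * w j + ((2 - τ) / τ) * (w j) ^ (-(τ / (2 - τ)))))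

theorem stmt_11 (m N : ℕ) (τ C : ℝ) (hτ0 : 0 < τ) (hτ1 : τ ≤ 1) (hC : 0 < C)
    (Φ : Matrix (Fin m) (Fin N) ℂ) (y : Fin m → ℂ)
    (xhat : ℕ → Fin N → ℂ) (w : ℕ → Fin N → ℝ) (ε a : ℕ → ℝ)
    (hε : ∀ n, 0 < ε n) (ha : ∀ n, 0 ≤ a n) (hasum : Summable a)
    (hwlb : ∀ n j, C ^ (-((2 - τ) / τ)) ≤ w n j)
    (hfeas : ∀ n, Φ.mulVec (xhat n) = y)
    (hmin : ∀ n, ∀ z : Fin N → ℂ, Φ.mulVec z = y →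
      ∑ j, ‖xhat (n + 1) j‖ ^ 2 * w n j ≤ ∑ j, ‖z j‖ ^ 2 * w n j)
    (hkey : ∀ n, (τ / 2) * ∑ j, ‖xhat n j - xhat (n + 1) j‖ ^ 2 * w n j ≤
      Jfun τ (xhat n) (w n) (ε n) - Jfun τ (xhat (n + 1)) (w (n + 1)) (ε (n + 1))
        + 2 * a (n + 1))
    (hC1 : Jfun τ (xhat 1) (w 1) (ε 1) + 2 * ∑' n, a n ≤ C) :
    Summable (fun n : ℕ => ∑ j, ‖xhat (n + 1 + 1) j - xhat (n + 1) j‖ ^ 2) ∧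
    (∑' n : ℕ, ∑ j, ‖xhat (n + 1 + 1) j - xhat (n + 1) j‖ ^ 2) ≤
      (2 / τ) * C ^ ((2 : ℝ) / τ) ∧
    Filter.Tendsto (fun n : ℕ => Real.sqrt (∑ j, ‖xhat (n + 1) j - xhat n j‖ ^ 2))
      Filter.atTop (nhds 0) := by
  set w0 : ℝ := C ^ (-((2 - τ) / τ)) with hw0def
  have hw0 : 0 < w0 := Real.rpow_pos_of_pos hC _
  have hτne : τ ≠ 0 := hτ0.ne'
  set f : ℕ → ℝ := fun n => ∑ j, ‖xhat (n + 1 + 1) j - xhat (n + 1) j‖ ^ 2 with hfdef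
  have hfnn : ∀ n, 0 ≤ f n := fun n =>
    Finset.sum_nonneg fun j _ => by positivity
  -- J is nonnegative
  have hJnn : ∀ n, 0 ≤ Jfun τ (xhat n) (w n) (ε n) := by
    intro n
    have hw : ∀ j, 0 < w n j := fun j => lt_of_lt_of_le hw0 (hwlb n j)
    unfold Jfun
    have h1 : 0 ≤ ∑ j, ‖xhat n j‖ ^ 2 * w n j :=
      Finset.sum_nonneg fun j _ => mul_nonneg (by positivity) (hw j).le
    have h2 : 0 ≤ ∑ j, (ε n ^ 2 * w n j + ((2 - τ) / τ) * (w n j) ^ (-(τ / (2 - τ)))) := by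
      apply Finset.sum_nonneg
      intro j _
      have h2τ : (0:ℝ) < 2 - τ := by linarith
      have hq : (0:ℝ) ≤ (2 - τ) / τ := by positivity
      exact add_nonneg (mul_nonneg (by positivity) (hw j).le)
        (mul_nonneg hq (Real.rpow_pos_of_pos (hw j) _).le)
    have : (0:ℝ) ≤ τ / 2 := by linarith
    exact mul_nonneg this (add_nonneg h1 h2)
  -- partial sum bound
  have hpart : ∀ M, (τ / 2) * w0 * ∑ n ∈ Finset.range M, f n ≤ C := by
    intro M
    have hstep : ∀ n, (τ / 2) * (w0 * f n) ≤
        Jfun τ (xhat (n + 1)) (w (n + 1)) (ε (n + 1))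
          - Jfun τ (xhat (n + 2)) (w (n + 2)) (ε (n + 2)) + 2 * a (n + 2) := by
      intro n
      refine le_trans ?_ (hkey (n + 1))
      have hwf : w0 * f n ≤ ∑ j, ‖xhat (n + 1) j - xhat (n + 1 + 1) j‖ ^ 2 * w (n + 1) j := by
        rw [hfdef, Finset.mul_sum]
        apply Finset.sum_le_sum
        intro j _
        have hnr : ‖xhat (n + 1) j - xhat (n + 1 + 1) j‖ = ‖xhat (n + 1 + 1) j - xhat (n + 1) j‖ :=
          norm_sub_rev _ _
        rw [hnr, mul_comm]
        have hsq : (0:ℝ) ≤ ‖xhat (n + 1 + 1) j - xhat (n + 1) j‖ ^ 2 := by positivity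
        exact mul_le_mul_of_nonneg_left (hwlb (n + 1) j) hsq
      exact mul_le_mul_of_nonneg_left hwf (by linarith)
    have hsum1 : ∑ n ∈ Finset.range M, ((τ / 2) * (w0 * f n)) ≤
        (Jfun τ (xhat 1) (w 1) (ε 1) - Jfun τ (xhat (M + 1)) (w (M + 1)) (ε (M + 1)))
          + 2 * ∑ n ∈ Finset.range M, a (n + 2) := by
      have := Finset.sum_le_sum (fun n (_ : n ∈ Finset.range M) => hstep n)
      refine this.trans (le_of_eq ?_)
      rw [Finset.sum_add_distrib, Finset.sum_range_sub'
        (fun n => Jfun τ (xhat (n + 1)) (w (n + 1)) (ε (n + 1))), ← Finset.mul_sum]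
    have hatail : ∑ n ∈ Finset.range M, a (n + 2) ≤ ∑' n, a n := by
      calc ∑ n ∈ Finset.range M, a (n + 2)
          = ∑ n ∈ (Finset.range M).image (· + 2), a n :=
            (Finset.sum_image (by intro x _ y _ h; simp only at h; omega)).symm
        _ ≤ ∑' n, a n := Summable.sum_le_tsum _ (fun i _ => ha i) hasum
    have hJM := hJnn (M + 1)
    have : (τ / 2) * w0 * ∑ n ∈ Finset.range M, f n
        = ∑ n ∈ Finset.range M, ((τ / 2) * (w0 * f n)) := by
      rw [Finset.mul_sum]; exact Finset.sum_congr rfl fun n _ => by ring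
    rw [this]
    linarith [hsum1, hatail, hC1, hJM]
  -- arithmetic identity
  have hCB : (τ / 2) * w0 * ((2 / τ) * C ^ ((2 : ℝ) / τ)) = C := by
    have h1 : w0 * C ^ ((2 : ℝ) / τ) = C := by
      rw [hw0def, ← Real.rpow_add hC]
      have he : -((2 - τ) / τ) + 2 / τ = 1 := by field_simp; ring
      rw [he, Real.rpow_one]
    calc (τ / 2) * w0 * ((2 / τ) * C ^ ((2 : ℝ) / τ))
        = ((τ / 2) * (2 / τ)) * (w0 * C ^ ((2 : ℝ) / τ)) := by ring
      _ = C := by rw [h1]; field_simp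
  have hpos : 0 < (τ / 2) * w0 := by positivity
  have hbound : ∀ M, ∑ n ∈ Finset.range M, f n ≤ (2 / τ) * C ^ ((2 : ℝ) / τ) := by
    intro M
    have := hpart M
    nlinarith [hpart M]
  have hsummable : Summable f := summable_of_sum_range_le hfnn hbound
  have htsum : ∑' n, f n ≤ (2 / τ) * C ^ ((2 : ℝ) / τ) := Summable.tsum_le_of_sum_range_le hsummable hbound
  refine ⟨hsummable, htsum, ?_⟩
  have h0 : Filter.Tendsto f Filter.atTop (nhds 0) := hsummable.tendsto_atTop_zero
  have h1 : Filter.Tendsto (fun n : ℕ => ∑ j, ‖xhat (n + 1) j - xhat n j‖ ^ 2)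
      Filter.atTop (nhds 0) := by
    rw [← Filter.tendsto_add_atTop_iff_nat 1]
    exact h0
  have := (Real.continuous_sqrt.tendsto 0).comp h1
  simpa [Function.comp_def, Real.sqrt_zero] using this
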